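/- Let σ, c, π > 0, T > 0, and let v(t,x) = Φ(−x/(σ√(T−t))) + Φ((x − cπ(T−t))/(σ√(T−t)))·exp(−cπx/σ² + π²c²(T−t)/(2σ²)) for t < T. Then v(t,x) > 0 for all (t,x) ∈ [0,T) × ℝ, and hence α(t,x) := −(σ²/c)·(∂_x v)/(v) is well defined; moreover 0 ≤ α(t,x) ≤ π for all (t,x) ∈ [0,T) × ℝ. -/

import Mathlib

open Set Real MeasureTheory

/-- The standard normal cumulative distribution function. -/
noncomputable def stdNormalCDF (x : ℝ) : ℝ :=
  ∫ y in Set.Iic x, Real.exp (-y ^ 2 / 2) / Real.sqrt (2 * π)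

noncomputable def stdφ (x : ℝ) : ℝ := Real.exp (-x ^ 2 / 2) / Real.sqrt (2 * π)

lemma stdφ_pos (x : ℝ) : 0 < stdφ x := by
  unfold stdφ
  positivity

lemma integrable_stdφ : Integrable stdφ := by
  have h := integrable_exp_neg_mul_sq (by norm_num : (0:ℝ) < 1/2)
  have : stdφ = fun x => Real.exp (-(1/2) * x ^ 2) / Real.sqrt (2 * π) := by
    funext x; unfold stdφ; ring_nf
  rw [this]
  exact h.div_const _

lemma continuous_stdφ : Continuous stdφ := by
  unfold stdφ
  continuity

lemma exp_arg_identity (c pen x σ τ s : ℝ) (hσ : σ ≠ 0) (hτ : τ ≠ 0)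
    (hs2 : s ^ 2 = σ ^ 2 * τ) :
    -((x - c * pen * τ) / s) ^ 2 / 2
        + (-(c * pen * x) / σ ^ 2 + pen ^ 2 * c ^ 2 * τ / (2 * σ ^ 2))
      = -(-x / s) ^ 2 / 2 := by
  rw [div_pow, div_pow, hs2]
  field_simp
  ring

lemma hasDerivAt_stdNormalCDF (x : ℝ) : HasDerivAt stdNormalCDF (stdφ x) x := by
  have hrepr : stdNormalCDF = fun u => stdNormalCDF 0 + ∫ y in (0:ℝ)..u, stdφ y := by
    funext u
    have := intervalIntegral.integral_Iic_sub_Iic (μ := volume) (f := stdφ)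
      integrable_stdφ.integrableOn integrable_stdφ.integrableOn (a := (0:ℝ)) (b := u)
    have h2 : stdNormalCDF u - stdNormalCDF 0 = ∫ y in (0:ℝ)..u, stdφ y := this
    linarith
  rw [hrepr]
  exact (intervalIntegral.integral_hasDerivAt_right
    integrable_stdφ.intervalIntegrable
    (continuous_stdφ.stronglyMeasurableAtFilter _ _)
    continuous_stdφ.continuousAt).const_add _

lemma stdNormalCDF_pos (x : ℝ) : 0 < stdNormalCDF x := by
  have : stdNormalCDF x = ∫ y in Set.Iic x, stdφ y := rfl
  rw [this, setIntegral_pos_iff_support_of_nonneg_ae]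
  · have hsupp : Function.support stdφ = Set.univ := by
      ext y; simp [Function.mem_support, (stdφ_pos y).ne']
    rw [hsupp, Set.univ_inter]
    simp [Real.volume_Iic]
  · exact Filter.Eventually.of_forall fun y => (stdφ_pos y).le
  · exact integrable_stdφ.integrableOn

/-- positivity of the explicit heat-equation solution `v`, and the
bounds `0 ≤ α ≤ π` for the Hopf–Cole allowance price
`α(t,x) = −(σ²/c)·(∂_x v)/v` on `[0,T) × ℝ`. -/
theorem allowance_price_bounds
    (σ c pen T : ℝ) (hσ : 0 < σ) (hc : 0 < c) (hpen : 0 < pen) (hT : 0 < T)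
    (v : ℝ → ℝ → ℝ)
    (hv : ∀ t < T, ∀ x : ℝ,
      v t x = stdNormalCDF (-x / (σ * Real.sqrt (T - t)))
        + stdNormalCDF ((x - c * pen * (T - t)) / (σ * Real.sqrt (T - t)))
          * Real.exp (-(c * pen * x) / σ ^ 2 + pen ^ 2 * c ^ 2 * (T - t) / (2 * σ ^ 2)))
    (α : ℝ → ℝ → ℝ)
    (hα : ∀ t x, α t x = -(σ ^ 2 / c) * deriv (fun y => v t y) x / v t x) :
    ∀ t ∈ Ico 0 T, ∀ x : ℝ,
      0 < v t x ∧ 0 ≤ α t x ∧ α t x ≤ pen := by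
  intro t ht x
  set τ := T - t with hτdef
  have hτ : 0 < τ := sub_pos.2 ht.2
  set s : ℝ := σ * Real.sqrt τ with hsdef
  have hs : 0 < s := mul_pos hσ (Real.sqrt_pos.2 hτ)
  have hs2 : s ^ 2 = σ ^ 2 * τ := by
    rw [hsdef, mul_pow, Real.sq_sqrt hτ.le]
  set z1 : ℝ := -x / s with hz1
  set z2 : ℝ := (x - c * pen * τ) / s with hz2
  set E : ℝ := Real.exp (-(c * pen * x) / σ ^ 2 + pen ^ 2 * c ^ 2 * τ / (2 * σ ^ 2)) with hE
  have hEpos : 0 < E := Real.exp_pos _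
  -- function form of v t
  have hvfun : (fun y => v t y) = fun y =>
      stdNormalCDF (-y / s) + stdNormalCDF ((y - c * pen * τ) / s)
        * Real.exp (-(c * pen * y) / σ ^ 2 + pen ^ 2 * c ^ 2 * τ / (2 * σ ^ 2)) := by
    funext y; exact hv t ht.2 y
  have hvx : v t x = stdNormalCDF z1 + stdNormalCDF z2 * E := hv t ht.2 x
  have hvpos : 0 < v t x := by
    rw [hvx]
    have := stdNormalCDF_pos z1
    have := stdNormalCDF_pos z2
    nlinarith
  -- key identity
  have hexp : -((x - c * pen * τ) / s) ^ 2 / 2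
        + (-(c * pen * x) / σ ^ 2 + pen ^ 2 * c ^ 2 * τ / (2 * σ ^ 2))
      = -(-x / s) ^ 2 / 2 :=
    exp_arg_identity c pen x σ τ s hσ.ne' hτ.ne' hs2
  have hkey : stdφ z2 * E = stdφ z1 := by
    unfold stdφ
    rw [div_mul_eq_mul_div, ← Real.exp_add]
    rw [hz1, hz2, hexp]
  -- derivative computation
  have h1 : HasDerivAt (fun y : ℝ => -y / s) (-1 / s) x := by
    simpa using ((hasDerivAt_id x).neg.div_const s)
  have h1c : HasDerivAt (fun y => stdNormalCDF (-y / s)) (stdφ z1 * (-1 / s)) x :=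
    by have := (hasDerivAt_stdNormalCDF z1).comp x h1; exact this
  have h2 : HasDerivAt (fun y : ℝ => (y - c * pen * τ) / s) (1 / s) x := by
    simpa using (((hasDerivAt_id x).sub_const (c * pen * τ)).div_const s)
  have h2c : HasDerivAt (fun y => stdNormalCDF ((y - c * pen * τ) / s)) (stdφ z2 * (1 / s)) x :=
    by have := (hasDerivAt_stdNormalCDF z2).comp x h2; exact this
  have h3i : HasDerivAt (fun y : ℝ => -(c * pen * y) / σ ^ 2 + pen ^ 2 * c ^ 2 * τ / (2 * σ ^ 2))
      (-(c * pen) / σ ^ 2) x := by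
    have : HasDerivAt (fun y : ℝ => c * pen * y) (c * pen) x := by
      simpa using (hasDerivAt_id x).const_mul (c * pen)
    simpa using (this.neg.div_const (σ ^ 2)).add_const (pen ^ 2 * c ^ 2 * τ / (2 * σ ^ 2))
  have h3 : HasDerivAt (fun y : ℝ => Real.exp (-(c * pen * y) / σ ^ 2 + pen ^ 2 * c ^ 2 * τ / (2 * σ ^ 2)))
      (E * (-(c * pen) / σ ^ 2)) x := by
    have := (Real.hasDerivAt_exp _).comp x h3i; exact this
  have hD : HasDerivAt (fun y => v t y)
      (stdφ z1 * (-1 / s) + (stdφ z2 * (1 / s) * E + stdNormalCDF z2 * (E * (-(c * pen) / σ ^ 2)))) x := by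
    rw [hvfun]
    exact h1c.add (h2c.mul h3)
  have hderiv : deriv (fun y => v t y) x = -(c * pen / σ ^ 2) * (stdNormalCDF z2 * E) := by
    rw [hD.deriv]
    have : stdφ z2 * (1 / s) * E = stdφ z1 * (1 / s) := by
      rw [mul_comm (stdφ z2) (1/s), mul_assoc, hkey]; ring
    rw [this]; ring
  have hαeq : α t x = pen * (stdNormalCDF z2 * E) / v t x := by
    rw [hα, hderiv]
    field_simp
  refine ⟨hvpos, ?_, ?_⟩
  · rw [hαeq]
    have := stdNormalCDF_pos z2
    positivity
  · rw [hαeq, div_le_iff₀ hvpos, hvx]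
    have h1 := (stdNormalCDF_pos z1).le
    have h2 := (stdNormalCDF_pos z2).le
    nlinarith
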